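/- Tail-summability criterion: Let (a_ℓ)_{ℓ≥0}, (b_ℓ)_{ℓ≥0} be sequences of nonnegative reals and suppose there are constants q ∈ (0,1), C₁, C₂ > 0 and δ ∈ (0,1) such that (i) a_{ℓ+1} ≤ q a_ℓ + b_ℓ for all ℓ, (ii) b_{ℓ+M} ≤ C₁ a_ℓ for all ℓ, M ≥ 0, and (iii) Σ_{ℓ'=ℓ}^{ℓ+M} b_{ℓ'}² ≤ C₂ (M+1)^{1−δ} a_ℓ² for all ℓ, M ≥ 0. Then (a_ℓ) is tail-summable: there exists C > 0 with Σ_{ℓ'=ℓ+1}^{∞} a_{ℓ'} ≤ C a_ℓ for all ℓ ≥ 0. -/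
import Mathlib


open Finset

set_option maxHeartbeats 2000000 in
/-- Tail-summability criterion from [fps2023, Lemma 5]. -/
theorem tail_summability_criterion
    (a b : ℕ → ℝ) (q C₁ C₂ δ : ℝ)
    (hq0 : 0 < q) (hq1 : q < 1)
    (hC₁ : 0 < C₁) (hC₂ : 0 < C₂)
    (hδ0 : 0 < δ) (hδ1 : δ < 1)
    (ha : ∀ ℓ, 0 ≤ a ℓ) (hb : ∀ ℓ, 0 ≤ b ℓ)
    (h1 : ∀ ℓ, a (ℓ + 1) ≤ q * a ℓ + b ℓ)
    (h2 : ∀ ℓ M : ℕ, b (ℓ + M) ≤ C₁ * a ℓ)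
    (h3 : ∀ ℓ M : ℕ,
      ∑ k ∈ Finset.range (M + 1), (b (ℓ + k)) ^ 2
        ≤ C₂ * ((M : ℝ) + 1) ^ ((1 : ℝ) - δ) * (a ℓ) ^ 2) :
    ∃ C : ℝ, 0 < C ∧
      ∀ ℓ M : ℕ, ∑ k ∈ Finset.range M, a (ℓ + 1 + k) ≤ C * a ℓ := by
  have hq' : 0 < 1 - q := by linarith
  obtain ⟨K, hKdef⟩ : ∃ K : ℝ, K = 1 + C₁ / (1 - q) := ⟨_, rfl⟩
  have hK1 : 1 ≤ K := by
    have : 0 ≤ C₁ / (1 - q) := div_nonneg hC₁.le hq'.le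
    rw [hKdef]; linarith
  have hK0 : 0 < K := by linarith
  have hKq : K * (1 - q) = (1 - q) + C₁ := by
    rw [hKdef]; field_simp
  -- Step B : uniform forward bound
  have hKbd : ∀ ℓ m, a (ℓ + m) ≤ K * a ℓ := by
    intro ℓ m
    induction m with
    | zero => simpa using le_mul_of_one_le_left (ha ℓ) hK1
    | succ m ih =>
      have h2' := h2 ℓ m
      have hrec : a (ℓ + (m + 1)) ≤ q * a (ℓ + m) + b (ℓ + m) := by
        have := h1 (ℓ + m)
        simpa [Nat.add_assoc] using this
      have h1' : q * a (ℓ + m) ≤ q * (K * a ℓ) :=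
        mul_le_mul_of_nonneg_left ih hq0.le
      have haℓ := ha ℓ
      nlinarith [hrec, h1', h2', hKq]
  -- Step C : squared recursion
  obtain ⟨c, hcdef⟩ : ∃ c : ℝ, c = 1 / (1 - q) := ⟨_, rfl⟩
  have hc0 : 0 < c := by rw [hcdef]; exact div_pos one_pos hq'
  have hsq : ∀ ℓ, (a (ℓ + 1)) ^ 2 ≤ q * (a ℓ) ^ 2 + c * (b ℓ) ^ 2 := by
    intro ℓ
    have h := h1 ℓ
    have hx : 0 ≤ a (ℓ + 1) := ha _
    have key : (q * a ℓ + b ℓ) ^ 2 ≤ q * (a ℓ) ^ 2 + c * (b ℓ) ^ 2 := by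
      rw [← sub_nonneg]
      have h₁ : q * (a ℓ) ^ 2 + c * (b ℓ) ^ 2 - (q * a ℓ + b ℓ) ^ 2
          = (q / (1 - q)) * ((1 - q) * a ℓ - b ℓ) ^ 2 := by
        rw [hcdef]; field_simp; ring
      rw [h₁]
      exact mul_nonneg (div_nonneg hq0.le hq'.le) (sq_nonneg _)
    calc (a (ℓ + 1)) ^ 2 ≤ (q * a ℓ + b ℓ) ^ 2 := by
          apply pow_le_pow_left₀ hx h
      _ ≤ _ := key
  -- Step D : block bound for squares
  obtain ⟨D, hDdef⟩ : ∃ D : ℝ, D = (1 + c * C₂) / (1 - q) := ⟨_, rfl⟩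
  have hDeq : (1 - q) * D = 1 + c * C₂ := by
    rw [hDdef]; field_simp
  have hD1 : 1 ≤ D := by nlinarith [mul_pos hc0 hC₂]
  have hS : ∀ ℓ M, ∑ k ∈ range (M + 1), (a (ℓ + k)) ^ 2
      ≤ D * ((M : ℝ) + 1) ^ ((1 : ℝ) - δ) * (a ℓ) ^ 2 := by
    intro ℓ M
    induction M with
    | zero =>
      simp only [Nat.cast_zero, zero_add, Real.one_rpow, range_one, sum_singleton,
        Nat.add_zero, mul_one]
      nlinarith [sq_nonneg (a ℓ)]
    | succ M ih =>
      have peel : ∑ k ∈ range (M + 1 + 1), (a (ℓ + k)) ^ 2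
          = (∑ k ∈ range (M + 1), (a (ℓ + (k + 1))) ^ 2) + (a (ℓ + 0)) ^ 2 :=
        Finset.sum_range_succ' _ _
      have hterm : ∀ k ∈ range (M + 1),
          (a (ℓ + (k + 1))) ^ 2 ≤ q * (a (ℓ + k)) ^ 2 + c * (b (ℓ + k)) ^ 2 := by
        intro k _
        have := hsq (ℓ + k)
        simpa [Nat.add_assoc] using this
      have hsum : ∑ k ∈ range (M + 1), (a (ℓ + (k + 1))) ^ 2
          ≤ q * (∑ k ∈ range (M + 1), (a (ℓ + k)) ^ 2)
            + c * (∑ k ∈ range (M + 1), (b (ℓ + k)) ^ 2) := by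
        rw [Finset.mul_sum, Finset.mul_sum, ← Finset.sum_add_distrib]
        exact Finset.sum_le_sum hterm
      have hB := h3 ℓ M
      have hMc : (0 : ℝ) ≤ (M : ℝ) := Nat.cast_nonneg M
      have hP1 : (1 : ℝ) ≤ ((M : ℝ) + 1) ^ ((1 : ℝ) - δ) := by
        calc (1 : ℝ) = (1 : ℝ) ^ ((1 : ℝ) - δ) := (Real.one_rpow _).symm
          _ ≤ ((M : ℝ) + 1) ^ ((1 : ℝ) - δ) :=
            Real.rpow_le_rpow zero_le_one (by linarith) (by linarith)
      have hmono : ((M : ℝ) + 1) ^ ((1 : ℝ) - δ) ≤ ((M : ℝ) + 1 + 1) ^ ((1 : ℝ) - δ) :=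
        Real.rpow_le_rpow (by linarith) (by linarith) (by linarith)
      have hq_sum : q * (∑ k ∈ range (M + 1), (a (ℓ + k)) ^ 2)
          ≤ q * (D * ((M : ℝ) + 1) ^ ((1 : ℝ) - δ) * (a ℓ) ^ 2) :=
        mul_le_mul_of_nonneg_left ih hq0.le
      have hc_sum : c * (∑ k ∈ range (M + 1), (b (ℓ + k)) ^ 2)
          ≤ c * (C₂ * ((M : ℝ) + 1) ^ ((1 : ℝ) - δ) * (a ℓ) ^ 2) :=
        mul_le_mul_of_nonneg_left hB hc0.le
      rw [peel]
      simp only [Nat.add_zero]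
      push_cast
      set P : ℝ := ((M : ℝ) + 1) ^ ((1 : ℝ) - δ) with hP
      set P' : ℝ := ((M : ℝ) + 1 + 1) ^ ((1 : ℝ) - δ) with hP'
      have hDP : D * P ≤ D * P' := mul_le_mul_of_nonneg_left hmono (by linarith)
      have hPa : (a ℓ) ^ 2 ≤ P * (a ℓ) ^ 2 := le_mul_of_one_le_left (sq_nonneg _) hP1
      have hDPa : D * P * (a ℓ) ^ 2 ≤ D * P' * (a ℓ) ^ 2 :=
        mul_le_mul_of_nonneg_right hDP (sq_nonneg _)
      have hcomb : P * (a ℓ) ^ 2 + q * (D * P * (a ℓ) ^ 2) + c * (C₂ * P * (a ℓ) ^ 2)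
          = D * P * (a ℓ) ^ 2 := by
        linear_combination (-(P * (a ℓ) ^ 2)) * hDeq
      linarith [hsum, hq_sum, hc_sum]
  -- Step E : choose M₀
  obtain ⟨M₀, hM₀1, hM₀pow⟩ : ∃ M₀ : ℕ, 1 ≤ M₀ ∧ 8 * K ^ 2 * D ≤ ((M₀ : ℝ) + 1) ^ δ := by
    have h8 : (0 : ℝ) ≤ 8 * K ^ 2 * D := by nlinarith
    obtain ⟨N, hN⟩ := exists_nat_ge ((8 * K ^ 2 * D) ^ (1 / δ))
    refine ⟨N + 1, Nat.le_add_left 1 N, ?_⟩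
    have hx₀ : 8 * K ^ 2 * D = ((8 * K ^ 2 * D) ^ (1 / δ)) ^ δ := by
      rw [← Real.rpow_mul h8, one_div, inv_mul_cancel₀ hδ0.ne', Real.rpow_one]
    rw [hx₀]
    apply Real.rpow_le_rpow (Real.rpow_nonneg h8 _) _ hδ0.le
    push_cast
    linarith
  have hM₀R : (1 : ℝ) ≤ (M₀ : ℝ) := by exact_mod_cast hM₀1
  have hKsq : (0 : ℝ) < 4 * K ^ 2 := by positivity
  have hPpos : (0 : ℝ) < ((M₀ : ℝ) + 1) ^ δ := Real.rpow_pos_of_pos (by linarith) δ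
  have hkey : D * ((M₀ : ℝ) + 1) ^ ((1 : ℝ) - δ) ≤ (M₀ : ℝ) / (4 * K ^ 2) := by
    have hsub : ((M₀ : ℝ) + 1) ^ ((1 : ℝ) - δ)
        = ((M₀ : ℝ) + 1) / ((M₀ : ℝ) + 1) ^ δ := by
      rw [Real.rpow_sub (by linarith), Real.rpow_one]
    rw [hsub, mul_div_assoc', div_le_div_iff₀ hPpos hKsq]
    nlinarith [hM₀pow, hM₀R, hD1, hK0, sq_nonneg K,
      mul_le_mul_of_nonneg_left hM₀pow (by linarith : (0:ℝ) ≤ (M₀ : ℝ))]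
  -- Step F : halving
  have hhalf : ∀ ℓ, a (ℓ + M₀) ≤ a ℓ / 2 := by
    intro ℓ
    obtain ⟨k, hk, hak⟩ : ∃ k ∈ Finset.Icc 1 M₀, (a (ℓ + k)) ^ 2 ≤ (a ℓ) ^ 2 / (4 * K ^ 2) := by
      by_contra hcon
      push_neg at hcon
      have hne : (Finset.Icc 1 M₀).Nonempty := ⟨1, by simp [hM₀1]⟩
      have hsumlt : ∑ _k ∈ Finset.Icc 1 M₀, (a ℓ) ^ 2 / (4 * K ^ 2)
          < ∑ k ∈ Finset.Icc 1 M₀, (a (ℓ + k)) ^ 2 :=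
        Finset.sum_lt_sum_of_nonempty hne hcon
      have hcard : (Finset.Icc 1 M₀).card = M₀ := by
        rw [Nat.card_Icc]; omega
      rw [Finset.sum_const, hcard, nsmul_eq_mul] at hsumlt
      have hsub : ∑ k ∈ Finset.Icc 1 M₀, (a (ℓ + k)) ^ 2
          ≤ ∑ k ∈ range (M₀ + 1), (a (ℓ + k)) ^ 2 := by
        apply Finset.sum_le_sum_of_subset_of_nonneg
        · intro x hx
          simp only [Finset.mem_Icc] at hx
          simp only [Finset.mem_range]
          omega
        · exact fun i _ _ => sq_nonneg _
      have hchain : ∑ k ∈ range (M₀ + 1), (a (ℓ + k)) ^ 2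
          ≤ ((M₀ : ℝ) / (4 * K ^ 2)) * (a ℓ) ^ 2 := by
        refine le_trans (hS ℓ M₀) ?_
        have := mul_le_mul_of_nonneg_right hkey (sq_nonneg (a ℓ))
        linarith
      have heq : (M₀ : ℝ) * ((a ℓ) ^ 2 / (4 * K ^ 2))
          = ((M₀ : ℝ) / (4 * K ^ 2)) * (a ℓ) ^ 2 := by ring
      linarith
    simp only [Finset.mem_Icc] at hk
    have hak2 : (2 * K * a (ℓ + k)) ^ 2 ≤ (a ℓ) ^ 2 := by
      have hmul := mul_le_mul_of_nonneg_right hak hKsq.le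
      rw [div_mul_cancel₀ _ hKsq.ne'] at hmul
      nlinarith [hmul]
    have hak' : 2 * K * a (ℓ + k) ≤ a ℓ := by
      have hx0 : 0 ≤ 2 * K * a (ℓ + k) := by
        have := ha (ℓ + k); nlinarith
      nlinarith [hak2, hx0, ha ℓ]
    have hfwd : a (ℓ + M₀) ≤ K * a (ℓ + k) := by
      have h := hKbd (ℓ + k) (M₀ - k)
      have heq : ℓ + k + (M₀ - k) = ℓ + M₀ := by omega
      rwa [heq] at h
    linarith [hfwd, hak']
  -- Step G : conclusion by strong induction on blocks
  have hM₀pos : (0 : ℝ) < (M₀ : ℝ) := by linarith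
  refine ⟨2 * K * M₀, by nlinarith [hM₀pos, hK0], ?_⟩
  have main : ∀ M ℓ, ∑ k ∈ range M, a (ℓ + 1 + k) ≤ 2 * K * M₀ * a ℓ := by
    intro M
    induction M using Nat.strong_induction_on with
    | _ M ih =>
      intro ℓ
      have hsmall : ∀ n, n ≤ M₀ → ∀ ℓ', ∑ k ∈ range n, a (ℓ' + 1 + k)
          ≤ (M₀ : ℝ) * (K * a ℓ') := by
        intro n hn ℓ'
        calc ∑ k ∈ range n, a (ℓ' + 1 + k) ≤ ∑ _k ∈ range n, K * a ℓ' := by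
              apply Finset.sum_le_sum
              intro k _
              have := hKbd ℓ' (1 + k)
              rwa [← Nat.add_assoc] at this
          _ = (n : ℝ) * (K * a ℓ') := by
              rw [Finset.sum_const, Finset.card_range, nsmul_eq_mul]
          _ ≤ (M₀ : ℝ) * (K * a ℓ') := by
              have hn' : (n : ℝ) ≤ (M₀ : ℝ) := by exact_mod_cast hn
              have h0 : 0 ≤ K * a ℓ' := mul_nonneg hK0.le (ha ℓ')
              nlinarith
      by_cases hM : M ≤ M₀
      · calc ∑ k ∈ range M, a (ℓ + 1 + k) ≤ (M₀ : ℝ) * (K * a ℓ) := hsmall M hM ℓ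
          _ ≤ 2 * K * M₀ * a ℓ := by nlinarith [mul_nonneg hK0.le (ha ℓ)]
      · push_neg at hM
        obtain ⟨M', rfl⟩ : ∃ M', M = M₀ + M' := ⟨M - M₀, by omega⟩
        have hsplit : ∑ k ∈ range (M₀ + M'), a (ℓ + 1 + k)
            = (∑ k ∈ range M₀, a (ℓ + 1 + k)) + ∑ k ∈ range M', a (ℓ + 1 + (M₀ + k)) :=
          Finset.sum_range_add _ _ _
        have htail : ∑ k ∈ range M', a (ℓ + 1 + (M₀ + k)) ≤ 2 * K * M₀ * a (ℓ + M₀) := by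
          have hlt : M' < M₀ + M' := by omega
          have heq : ∑ k ∈ range M', a (ℓ + 1 + (M₀ + k))
              = ∑ k ∈ range M', a (ℓ + M₀ + 1 + k) := by
            apply Finset.sum_congr rfl
            intro k _
            congr 1
            omega
          rw [heq]
          exact ih M' hlt (ℓ + M₀)
        have hhead : ∑ k ∈ range M₀, a (ℓ + 1 + k) ≤ (M₀ : ℝ) * (K * a ℓ) :=
          hsmall M₀ le_rfl ℓ
        have hh := hhalf ℓ
        have h2KM : (0 : ℝ) ≤ 2 * K * (M₀ : ℝ) := by positivity
        have hdrop : 2 * K * M₀ * a (ℓ + M₀) ≤ 2 * K * M₀ * (a ℓ / 2) :=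
          mul_le_mul_of_nonneg_left hh h2KM
        rw [hsplit]
        nlinarith [hhead, htail]
  intro ℓ M
  exact main M ℓ
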